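/- Fix generators v^(1), …, v^(n) ∈ (T₂ ∪ {∞})^d and let S be a bipartite graph on the node set [d] ⊔ [n]. Then the covector cell C_S = {p ∈ (T₂)^d : S ⊆ S_p} is rank two tropically convex: for all p, q ∈ C_S and all λ, μ ∈ T₂ ∪ {∞} with min(λ, μ) = (0,0), the point min(λ+p, μ+q) (coordinatewise lexicographic minimum) lies in C_S. -/

import Mathlib

noncomputable section
open scoped Classical

/-- The rank two tropical semifield `T₂`: `ℝ²` with the lexicographic order. -/
abbrev T2 := Lex (ℝ × ℝ)

/-- `T₂ ∪ {∞}`. -/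
abbrev T2i := WithTop T2

variable {d n : ℕ}

/-- The tropical linear combination `min_j (λ_j + v^(j))` of generators. -/
def tropCombN (v : Fin n → Fin d → T2i) (lam : Fin n → T2i) : Fin d → T2i :=
  fun i => Finset.univ.inf fun j => lam j + v j i

/-- The rank two tropical cone generated by `v^(1), …, v^(n)`. -/
def genCone (v : Fin n → Fin d → T2i) : Set (Fin d → T2i) :=
  {x | ∃ lam : Fin n → T2i, x = tropCombN v lam}

/-- The `i`-th sector of `u`:
`Z_i(u) = ⋂_{k, u_k ≠ ∞} {p : p_k − p_i ≤_lex u_k − u_i}`. -/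
def sector (u : Fin d → T2i) (i : Fin d) : Set (Fin d → T2) :=
  {p | ∀ k, (↑(p k - p i) + u i : T2i) ≤ u k}

/-- The covector `S_p` of `p` w.r.t. generators `v`: the bipartite graph on
`[d] ⊔ [n]` with `(i,j) ∈ S_p` iff `v^(j)_i ≠ ∞` and `p ∈ Z_i(v^(j))`. -/
def covector (v : Fin n → Fin d → T2i) (p : Fin d → T2) : Set (Fin d × Fin n) :=
  {ij | v ij.2 ij.1 ≠ ⊤ ∧ p ∈ sector (v ij.2) ij.1}

/-- The covector cell `C_S = {p : S ⊆ S_p}`. -/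
def cellC (v : Fin n → Fin d → T2i) (S : Set (Fin d × Fin n)) : Set (Fin d → T2) :=
  {p | S ⊆ covector v p}

/-- `S` is a covector w.r.t. `v`. -/
def IsCovector (v : Fin n → Fin d → T2i) (S : Set (Fin d × Fin n)) : Prop :=
  ∃ p : Fin d → T2, S = covector v p

/-- A bipartite graph on `[d] ⊔ [n]` is bounded if no node of `[d]` is isolated. -/
def BoundedGraph (S : Set (Fin d × Fin n)) : Prop := ∀ i, ∃ j, (i, j) ∈ S

/-- No node of `[n]` is isolated. -/
def NoIsolatedGen (S : Set (Fin d × Fin n)) : Prop := ∀ j, ∃ i, (i, j) ∈ S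

-- faces of covector cells
def faceC (v : Fin n → Fin d → T2i) (S : Set (Fin d × Fin n))
    (E : Set (Fin d × Fin n × Fin d)) : Set (Fin d → T2) :=
  cellC v S ∩ {p | ∀ e ∈ E, (↑(p e.2.2 - p e.1) + v e.2.1 e.1 : T2i) = v e.2.1 e.2.2}

def IsFaceC (v : Fin n → Fin d → T2i) (S : Set (Fin d × Fin n))
    (F : Set (Fin d → T2)) : Prop :=
  ∃ E : Set (Fin d × Fin n × Fin d),
    (∀ e ∈ E, (e.1, e.2.1) ∈ S ∧ v e.2.1 e.2.2 ≠ ⊤) ∧ F = faceC v S E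

def relintC (v : Fin n → Fin d → T2i) (S : Set (Fin d × Fin n)) : Set (Fin d → T2) :=
  {p | p ∈ cellC v S ∧ ∀ F, IsFaceC v S F → F ≠ cellC v S → p ∉ F}

/-- The pairing `⟨s,p⟩ = ∑ i, s i • p i` between `ℤ^d` and `(T₂)^d`. -/
def pairE (s : Fin d → ℤ) (p : Fin d → T2) : T2 := ∑ i, s i • p i

/-- A lex-polyhedron in `(T₂)^d`. -/
def IsLexPolyE (P : Set (Fin d → T2)) : Prop :=
  ∃ (k : ℕ) (s : Fin k → Fin d → ℤ) (q : Fin k → T2),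
    P = {p | ∀ i, pairE (s i) p ≤ q i}

-- rank one versions
def sector1 (u : Fin d → WithTop ℝ) (i : Fin d) : Set (Fin d → ℝ) :=
  {p | ∀ k, (↑(p k - p i) + u i : WithTop ℝ) ≤ u k}

def covector1 (v : Fin n → Fin d → WithTop ℝ) (p : Fin d → ℝ) :
    Set (Fin d × Fin n) :=
  {ij | v ij.2 ij.1 ≠ ⊤ ∧ p ∈ sector1 (v ij.2) ij.1}

def cell1C (v : Fin n → Fin d → WithTop ℝ) (S : Set (Fin d × Fin n)) :
    Set (Fin d → ℝ) :=
  {p | S ⊆ covector1 v p}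

def IsCovector1 (v : Fin n → Fin d → WithTop ℝ) (S : Set (Fin d × Fin n)) : Prop :=
  ∃ p : Fin d → ℝ, S = covector1 v p

/-- Projection `π_{u*}` onto first coordinates (sending `∞` to `∞`). -/
def projU2 (x : T2i) : WithTop ℝ := WithTop.map (fun a => (ofLex a).1) x

/-- Projection `π_{t*}` onto second coordinates (sending `∞` to `∞`). -/
def projT2 (x : T2i) : WithTop ℝ := WithTop.map (fun a => (ofLex a).2) x

def genU (v : Fin n → Fin d → T2i) : Fin n → Fin d → WithTop ℝ :=
  fun j i => projU2 (v j i)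

/-- The generators `V_T` of `K_T`. -/
def genRestrict (v : Fin n → Fin d → T2i) (T : Set (Fin d × Fin n)) :
    Fin n → Fin d → T2i :=
  fun j i => if (i, j) ∈ T then v j i else ⊤

def genTB (v : Fin n → Fin d → T2i) (T : Set (Fin d × Fin n)) :
    Fin n → Fin d → WithTop ℝ :=
  fun j i => projT2 (genRestrict v T j i)

/-- The identification `(ℝ²)^d ≅ ℝ_t^d × ℝ_u^d = ℝ^{2d}`. -/
def embed2 (p : Fin d → T2) : (Fin d → ℝ) × (Fin d → ℝ) :=
  (fun i => (ofLex (p i)).1, fun i => (ofLex (p i)).2)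

/-- The finite part of the tropical cone generated by `v`, as a subset of `(T₂)^d`. -/
def genConeFin (v : Fin n → Fin d → T2i) : Set (Fin d → T2) :=
  {p | (fun i => (↑(p i) : T2i)) ∈ genCone v}

/-- Covector cells are rank two tropically convex: for `p, q ∈ C_S`
and `λ, μ ∈ T₂ ∪ {∞}` with `min(λ,μ) = (0,0)`, the point `min(λ+p, μ+q)` (which has
all coordinates finite) again lies in `C_S`. -/
lemma sub_key (a b : T2) (u w : T2i) :
    (↑(a - b) + u ≤ w) ↔ ((a : T2i) + u ≤ (b : T2i) + w) := by
  have hb : ((b : T2i)) ≠ ⊤ := WithTop.coe_ne_top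
  have ha : (a : T2i) = (b : T2i) + ↑(a - b) := by
    rw [← WithTop.coe_add]; congr 1; abel
  rw [ha, add_assoc]
  exact (WithTop.add_le_add_iff_left hb).symm

theorem covector_cell_tropically_convex (d n : ℕ) (v : Fin n → Fin d → T2i)
    (S : Set (Fin d × Fin n)) (p q : Fin d → T2)
    (hp : p ∈ cellC v S) (hq : q ∈ cellC v S)
    (l m : T2i) (hlm : min l m = ((0 : T2) : T2i))
    (z : Fin d → T2)
    (hz : ∀ i, (↑(z i) : T2i) = min (l + ↑(p i)) (m + ↑(q i))) :
    z ∈ cellC v S := by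
  intro ij hij
  obtain ⟨hvne, hps⟩ := hp hij
  obtain ⟨_, hqs⟩ := hq hij
  refine ⟨hvne, fun k => ?_⟩
  rw [sub_key, hz k, hz ij.1]
  have hpk : (↑(p k) : T2i) + v ij.2 ij.1 ≤ ↑(p ij.1) + v ij.2 k :=
    (sub_key _ _ _ _).mp (hps k)
  have hqk : (↑(q k) : T2i) + v ij.2 ij.1 ≤ ↑(q ij.1) + v ij.2 k :=
    (sub_key _ _ _ _).mp (hqs k)
  have hmin : ∀ (a b c : T2i), min a b + c = min (a + c) (b + c) := fun a b c =>
    Monotone.map_min (f := fun x => x + c) (fun x y hxy => add_le_add_left hxy c)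
  rw [hmin, hmin]
  refine min_le_min ?_ ?_
  · rw [add_assoc, add_assoc]; exact add_le_add_right hpk l
  · rw [add_assoc, add_assoc]; exact add_le_add_right hqk m
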